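/- If a is a positive integer with a ≡ 1 (mod p) and a − 1 is not a power of p, writing a − 1 = Σ_{r=1}^t c_r p^r with c_t ≠ 0, then binom(a, p^t) is not divisible by p. -/

import Mathlib

theorem choose_p_pow_log_pred_not_dvd (p a : ℕ) (hp : p.Prime) (ha : 0 < a)
    (hmod : a % p = 1) (hnotpow : ∀ q : ℕ, a - 1 ≠ p ^ q) :
    ¬ p ∣ a.choose (p ^ Nat.log p (a - 1)) := by
  haveI : Fact p.Prime := ⟨hp⟩
  set t := Nat.log p (a - 1) with ht
  have hp1 : 1 < p := hp.one_lt
  have hpt_pos : 0 < p ^ t := pow_pos hp.pos t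
  -- bounds on a
  have hle : p ^ t ≤ a := by
    rcases eq_or_lt_of_le (show 1 ≤ a from ha) with h1 | h2
    · have : a = 1 := h1.symm
      subst this
      simp [ht, Nat.log_zero_right]
    · have h1 : a - 1 ≠ 0 := by omega
      have h3 := Nat.pow_log_le_self p h1
      rw [← ht] at h3
      omega
  have hlt : a < p ^ (t + 1) := by
    have h1 : a - 1 < p ^ (t + 1) := Nat.lt_pow_succ_log_self hp1 _
    have h2 : a ≠ p ^ (t + 1) := by
      intro h
      have : p ∣ a := h ▸ dvd_pow_self p (Nat.succ_ne_zero t)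
      rw [Nat.dvd_iff_mod_eq_zero] at this
      omega
    omega
  have hdivlt : a / p ^ t < p := by
    rw [Nat.div_lt_iff_lt_mul hpt_pos]
    calc a < p ^ (t + 1) := hlt
    _ = p * p ^ t := by ring
  have hdivge : 1 ≤ a / p ^ t := (Nat.one_le_div_iff hpt_pos).mpr hle
  -- Lucas
  have lucas := Choose.choose_modEq_choose_mul_prod_range_choose (n := a) (k := p ^ t) (p := p) t
  have hprod : ∏ i ∈ Finset.range t, Nat.choose (a / p ^ i % p) (p ^ t / p ^ i % p) = 1 := by
    apply Finset.prod_eq_one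
    intro i hi
    rw [Finset.mem_range] at hi
    have h1 : p ^ t / p ^ i = p ^ (t - i) := Nat.pow_div (le_of_lt hi) hp.pos
    have h2 : p ^ t / p ^ i % p = 0 := by
      rw [h1]
      exact Nat.eq_zero_of_dvd_of_lt (Nat.dvd_mod_iff (dvd_refl p) |>.mpr (dvd_pow_self p (Nat.sub_ne_zero_of_lt hi))) (Nat.mod_lt _ hp.pos)
    rw [h2, Nat.choose_zero_right]
  rw [Nat.div_self hpt_pos, Nat.choose_one_right, hprod, Nat.cast_one, mul_one] at lucas
  intro hdvd
  have h3 : (p : ℤ) ∣ (a.choose (p ^ t) : ℤ) := Int.natCast_dvd_natCast.mpr hdvd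
  have h4 : (p : ℤ) ∣ ((a / p ^ t : ℕ) : ℤ) := by
    have hd := Int.ModEq.dvd lucas
    simpa using dvd_add hd h3
  have h5 : p ∣ a / p ^ t := Int.natCast_dvd_natCast.mp h4
  have := Nat.le_of_dvd (by omega) h5
  omega
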